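/- Let n, d ≥ 1, let X be an n×d real matrix, let ρ ≥ 0, and let v ∈ ℝ^d. Then the infimum over all n×d real matrices E with ‖E‖_{1→2} ≤ ρ of (1/n)·‖X.mulVec v + E.mulVec v‖₂² equals (1/n)·(max(‖X.mulVec v‖₂ − ρ·‖v‖₁, 0))², and this infimum is attained. -/

import Mathlib

open Finset

private lemma mul_sign' (x : ℝ) : x * Real.sign x = |x| := by
  rcases lt_trichotomy x 0 with h|h|h
  · rw [Real.sign_of_neg h, abs_of_neg h]; ring
  · simp [h]
  · rw [Real.sign_of_pos h, abs_of_pos h]; ring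

private lemma sign_sq_le' (x : ℝ) : Real.sign x ^ 2 ≤ 1 := by
  rcases lt_trichotomy x 0 with h|h|h
  · rw [Real.sign_of_neg h]; norm_num
  · simp [h]
  · rw [Real.sign_of_pos h]; norm_num

theorem stmt4 (n d : ℕ) (hn : 1 ≤ n) (hd : 1 ≤ d)
    (X : Matrix (Fin n) (Fin d) ℝ) (ρ : ℝ) (hρ : 0 ≤ ρ) (v : Fin d → ℝ) :
    IsLeast {r : ℝ | ∃ E : Matrix (Fin n) (Fin d) ℝ,
        (⨆ j : Fin d, Real.sqrt (∑ i, E i j ^ 2)) ≤ ρ ∧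
        r = (1 / n) * ∑ i, ((X.mulVec v + E.mulVec v) i) ^ 2}
      ((1 / n) * max (Real.sqrt (∑ i, (X.mulVec v i) ^ 2) - ρ * ∑ j, |v j|) 0 ^ 2) := by
  haveI : Nonempty (Fin d) := ⟨⟨0, hd⟩⟩
  set u : Fin n → ℝ := X.mulVec v with hu
  set a : ℝ := Real.sqrt (∑ i, u i ^ 2) with ha
  set L : ℝ := ∑ j, |v j| with hL
  have hL0 : 0 ≤ L := Finset.sum_nonneg fun j _ => abs_nonneg _
  have ha0 : 0 ≤ a := Real.sqrt_nonneg _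
  have ha2 : a ^ 2 = ∑ i, u i ^ 2 :=
    Real.sq_sqrt (Finset.sum_nonneg fun i _ => sq_nonneg _)
  set T : ℝ := max (a - ρ * L) 0 with hT
  have hT0 : 0 ≤ T := le_max_right _ _
  have hnorm : ∀ x : Fin n → ℝ,
      ‖(WithLp.equiv 2 (Fin n → ℝ)).symm x‖ = Real.sqrt (∑ i, x i ^ 2) := by
    intro x
    rw [EuclideanSpace.norm_eq]
    congr 1
    refine Finset.sum_congr rfl fun i _ => ?_
    rw [WithLp.equiv_symm_apply, PiLp.toLp_apply, Real.norm_eq_abs, sq_abs]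
  constructor
  · -- membership: construct an optimal E
    set c : ℝ := if ρ * L < a then ρ / a else if L = 0 then 0 else 1 / L with hc
    have key : c ^ 2 * a ^ 2 ≤ ρ ^ 2 ∧ (1 - c * L) ^ 2 * a ^ 2 = T ^ 2 := by
      rw [hc]
      split_ifs with h1 h2
      · have hapos : 0 < a := lt_of_le_of_lt (by positivity) h1
        have hTeq : T = a - ρ * L := max_eq_left (by linarith)
        constructor
        · rw [div_pow, div_mul_eq_mul_div, div_le_iff₀ (by positivity)]
        · rw [hTeq]; field_simp
      · push_neg at h1
        have haz : a = 0 := le_antisymm (by simpa [h2] using h1) ha0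
        have hTz : T = 0 := by
          rw [hT, haz, h2]; simp
        constructor
        · simpa using sq_nonneg ρ
        · rw [hTz, haz]; ring
      · push_neg at h1
        have hLpos : 0 < L := lt_of_le_of_ne hL0 (Ne.symm h2)
        have hTz : T = 0 := max_eq_right (by nlinarith)
        constructor
        · rw [div_pow, one_pow, div_mul_eq_mul_div, div_le_iff₀ (by positivity)]
          nlinarith
        · have hcl : (1 : ℝ) - 1 / L * L = 0 := by field_simp; ring
          rw [hTz, hcl]; ring
    refine ⟨fun i j => -(Real.sign (v j) * c * u i), ?_, ?_⟩
    · apply ciSup_le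
      intro j
      have hsum : ∑ i, (-(Real.sign (v j) * c * u i)) ^ 2
          = Real.sign (v j) ^ 2 * c ^ 2 * a ^ 2 := by
        rw [ha2, Finset.mul_sum]
        exact Finset.sum_congr rfl fun i _ => by ring
      rw [hsum]
      have hle : Real.sign (v j) ^ 2 * c ^ 2 * a ^ 2 ≤ ρ ^ 2 := by
        nlinarith [sign_sq_le' (v j), key.1, sq_nonneg (c * a), sq_nonneg (Real.sign (v j))]
      calc Real.sqrt (Real.sign (v j) ^ 2 * c ^ 2 * a ^ 2)
          ≤ Real.sqrt (ρ ^ 2) := Real.sqrt_le_sqrt hle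
        _ = ρ := Real.sqrt_sq hρ
    · have hEv : ∀ i,
          (Matrix.mulVec (fun i j => -(Real.sign (v j) * c * u i)) v) i = -(c * L) * u i := by
        intro i
        simp only [Matrix.mulVec, dotProduct]
        calc ∑ j, -(Real.sign (v j) * c * u i) * v j
            = ∑ j, -(c * u i) * |v j| := by
              refine Finset.sum_congr rfl fun j _ => ?_
              rw [← mul_sign' (v j)]; ring
          _ = -(c * L) * u i := by rw [← Finset.mul_sum, ← hL]; ring
      have hval : ∑ i, ((u + Matrix.mulVec (fun i j => -(Real.sign (v j) * c * u i)) v) i) ^ 2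
          = T ^ 2 := by
        rw [← key.2, ha2, Finset.mul_sum]
        refine Finset.sum_congr rfl fun i _ => ?_
        rw [Pi.add_apply, hEv i]; ring
      rw [hval]
  · -- lower bound
    rintro r ⟨E, hE, rfl⟩
    have hbdd : ∀ j, Real.sqrt (∑ i, E i j ^ 2) ≤ ρ := fun j =>
      le_trans (le_ciSup (f := fun j => Real.sqrt (∑ i, E i j ^ 2)) (Set.Finite.bddAbove (Set.finite_range _)) j) hE
    set w : Fin n → ℝ := u + E.mulVec v with hw
    have hsplit : (WithLp.equiv 2 (Fin n → ℝ)).symm (E.mulVec v)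
        = ∑ j, v j • (WithLp.equiv 2 (Fin n → ℝ)).symm (fun i => E i j) := by
      ext i
      rw [WithLp.ofLp_sum, Finset.sum_apply]
      simp [Matrix.mulVec, dotProduct, WithLp.equiv_symm_apply, mul_comm]
    have h1 : ‖(WithLp.equiv 2 (Fin n → ℝ)).symm (E.mulVec v)‖ ≤ ρ * L := by
      rw [hsplit]
      calc ‖∑ j, v j • (WithLp.equiv 2 (Fin n → ℝ)).symm (fun i => E i j)‖
          ≤ ∑ j, ‖v j • (WithLp.equiv 2 (Fin n → ℝ)).symm (fun i => E i j)‖ :=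
            norm_sum_le _ _
        _ = ∑ j, |v j| * Real.sqrt (∑ i, E i j ^ 2) := by
            refine Finset.sum_congr rfl fun j _ => ?_
            rw [norm_smul, Real.norm_eq_abs, hnorm]
        _ ≤ ∑ j, |v j| * ρ := Finset.sum_le_sum fun j _ =>
            mul_le_mul_of_nonneg_left (hbdd j) (abs_nonneg _)
        _ = ρ * L := by rw [← Finset.sum_mul, ← hL, mul_comm]
    have h2 : a - ρ * L ≤ ‖(WithLp.equiv 2 (Fin n → ℝ)).symm w‖ := by
      have hXv : ‖(WithLp.equiv 2 (Fin n → ℝ)).symm u‖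
          ≤ ‖(WithLp.equiv 2 (Fin n → ℝ)).symm w‖
            + ‖(WithLp.equiv 2 (Fin n → ℝ)).symm (E.mulVec v)‖ := by
        have hdecomp : (WithLp.equiv 2 (Fin n → ℝ)).symm u
            = (WithLp.equiv 2 (Fin n → ℝ)).symm w
              - (WithLp.equiv 2 (Fin n → ℝ)).symm (E.mulVec v) := by
          ext i
          simp [hw]
        rw [hdecomp]
        exact norm_sub_le _ _
      have hXv' : ‖(WithLp.equiv 2 (Fin n → ℝ)).symm u‖ = a := hnorm u
      linarith [hXv' ▸ hXv]
    have h3 : T ≤ ‖(WithLp.equiv 2 (Fin n → ℝ)).symm w‖ := max_le h2 (norm_nonneg _)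
    have h4 : T ^ 2 ≤ ∑ i, w i ^ 2 := by
      calc T ^ 2 ≤ ‖(WithLp.equiv 2 (Fin n → ℝ)).symm w‖ ^ 2 := pow_le_pow_left₀ hT0 h3 2
        _ = ∑ i, w i ^ 2 := by
            rw [hnorm]
            exact Real.sq_sqrt (Finset.sum_nonneg fun i _ => sq_nonneg _)
    have hn0 : (0:ℝ) ≤ 1 / n := by positivity
    exact mul_le_mul_of_nonneg_left h4 hn0
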